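/- For any elements σ ∈ Ω_n, σ' ∈ Ω_{n'} of an nc set Ω over Gr^{(d;m)}(A), and any s ∈ GL_n(R), the following identities hold in Gr^{(d;m)}: (i) [[I_{n+n'}, T₁],[0, I_n]] · ((σ⊕σ')⊕σ) = (σ⊕σ')⊕σ with T₁ = [I_n; 0]; (ii) [[I_{n+n'}, T₂],[0, I_{n'}]] · ((σ⊕σ')⊕σ') = (σ⊕σ')⊕σ' with T₂ = [0; I_{n'}]; (iii) [[I_n, s^{-1}],[0, I_n]] · (σ ⊕ (s·σ)) = σ ⊕ (s·σ). -/

import Mathlib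

open Matrix

/-- `n × n` matrices over `A`. -/
abbrev Mat (A : Type) (n : ℕ) : Type := Matrix (Fin n) (Fin n) A

/-- `m × m` block matrices with `n × n` blocks over `A`, i.e. `M_m(M_n(A))`. -/
abbrev BMat (A : Type) (m n : ℕ) : Type := Matrix (Fin m) (Fin m) (Mat A n)

section NC

variable {R : Type} [CommRing R] {A : Type} [Ring A]

/-- Membership in the subgroup `H^{(d;m)}_n(A)` of invertible block lower-triangular
matrices `[[X,0],[Y,Z]]` with `X ∈ GL_{m-d}`, `Z ∈ GL_d`. -/
def memH (m d n : ℕ) (hd : d ≤ m) (Γ : BMat A m n) : Prop :=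
  IsUnit Γ ∧
  (∀ i j : Fin m, (i : ℕ) < m - d → m - d ≤ (j : ℕ) → Γ i j = 0) ∧
  IsUnit (Matrix.of fun i j : Fin (m - d) =>
    Γ ⟨(i : ℕ), lt_of_lt_of_le i.isLt (Nat.sub_le m d)⟩
      ⟨(j : ℕ), lt_of_lt_of_le j.isLt (Nat.sub_le m d)⟩) ∧
  IsUnit (Matrix.of fun i j : Fin d =>
    Γ ⟨m - d + (i : ℕ), by have := i.isLt; omega⟩
      ⟨m - d + (j : ℕ), by have := j.isLt; omega⟩)

/-- The relation `X ~ Y` iff `X = Y Γ` for some `Γ ∈ H^{(d;m)}_n(A)`. -/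
def grel (m d n : ℕ) (hd : d ≤ m) (X Y : BMat A m n) : Prop :=
  ∃ Γ : BMat A m n, memH m d n hd Γ ∧ X = Y * Γ

/-- Direct sum of square matrices. -/
def dsumMat {n n' : ℕ} (X : Mat A n) (Y : Mat A n') : Mat A (n + n') :=
  Matrix.reindex finSumFinEquiv finSumFinEquiv (Matrix.fromBlocks X 0 0 Y)

/-- Entrywise block direct sum `X ⊕̃ Y` of elements of `M_m(M_n(A))`, `M_m(M_{n'}(A))`. -/
def dsum {m n n' : ℕ} (X : BMat A m n) (Y : BMat A m n') : BMat A m (n + n') :=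
  Matrix.of fun i j => dsumMat (X i j) (Y i j)

/-- Direct sum of square matrices with entries in a module. -/
def dsumW {W : Type} [AddCommMonoid W] {n n' : ℕ}
    (X : Matrix (Fin n) (Fin n) W) (Y : Matrix (Fin n') (Fin n') W) :
    Matrix (Fin (n + n')) (Fin (n + n')) W :=
  Matrix.reindex finSumFinEquiv finSumFinEquiv (Matrix.fromBlocks X 0 0 Y)

/-- Block upper triangular matrix `[[P, H],[0, Q]]`. -/
def triW {W : Type} [AddCommMonoid W] {n n' : ℕ}
    (P : Matrix (Fin n) (Fin n) W) (H : Matrix (Fin n) (Fin n') W)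
    (Q : Matrix (Fin n') (Fin n') W) :
    Matrix (Fin (n + n')) (Fin (n + n')) W :=
  Matrix.reindex finSumFinEquiv finSumFinEquiv (Matrix.fromBlocks P H 0 Q)

/-- The unipotent upper triangular matrix `[[I, T],[0, I]]` over `R`. -/
def uptri (R : Type) [CommRing R] {p q : ℕ} (T : Matrix (Fin p) (Fin q) R) :
    Matrix (Fin (p + q)) (Fin (p + q)) R :=
  Matrix.reindex finSumFinEquiv finSumFinEquiv (Matrix.fromBlocks 1 T 0 1)

/-- Left multiplication of a representative by `s^{⊕ m}` for a scalar matrix `s` over `R`: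
the similarity action on the nc Grassmannian. -/
def simAct [Algebra R A] {m N : ℕ} (s : Matrix (Fin N) (Fin N) R) (X : BMat A m N) :
    BMat A m N :=
  Matrix.of fun i j => s.map (algebraMap R A) * X i j

/-- Multiplication of a matrix over an `R`-module `W` by a matrix over `R` on the left. -/
def rmulL {W : Type} [AddCommMonoid W] [Module R W] {p q r : ℕ}
    (s : Matrix (Fin p) (Fin q) R) (X : Matrix (Fin q) (Fin r) W) :
    Matrix (Fin p) (Fin r) W :=
  Matrix.of fun i j => ∑ k, s i k • X k j

/-- Multiplication of a matrix over an `R`-module `W` by a matrix over `R` on the right. -/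
def rmulR {W : Type} [AddCommMonoid W] [Module R W] {p q r : ℕ}
    (X : Matrix (Fin p) (Fin q) W) (s : Matrix (Fin q) (Fin r) R) :
    Matrix (Fin p) (Fin r) W :=
  Matrix.of fun i j => ∑ k, s k j • X i k

/-- Vertical concatenation of matrices. -/
def vcat {α : Type} {p p' q : ℕ} (X : Matrix (Fin p) (Fin q) α)
    (Y : Matrix (Fin p') (Fin q) α) : Matrix (Fin (p + p')) (Fin q) α :=
  Matrix.of fun i j =>
    if h : (i : ℕ) < p then X ⟨(i : ℕ), h⟩ j
    else Y ⟨(i : ℕ) - p, by have := i.isLt; omega⟩ j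

/-- The affine embedding `X ↦ [[0, I],[I, X]]` in the case `(d;m) = (1;2)`. -/
def affEmb {n : ℕ} (X : Mat A n) : BMat A 2 n := !![0, 1; 1, X]

/-- The matrix `[[0, X],[0, 0]] ∈ M_{n+n'}(A)` with `X ∈ M_{n,n'}(A)` in the upper right
corner. -/
def cornerMat {n n' : ℕ} (X : Matrix (Fin n) (Fin n') A) : Mat A (n + n') :=
  Matrix.reindex finSumFinEquiv finSumFinEquiv (Matrix.fromBlocks 0 X 0 0)

/-- The representative `(P;Q)_{u,v}(X)` of the element `(σ;σ')_{u,v}(X)`: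
`P ⊕̃ Q + Σ_{j=1}^d [[0, X Q_{v, m-d+j}],[0,0]] ⊗ e^{(m)}_{d+u, m-d+j}`. -/
def ins {m d n n' : ℕ} (hd : d ≤ m) (u : Fin (m - d)) (v : Fin d)
    (P : BMat A m n) (Q : BMat A m n') (X : Matrix (Fin n) (Fin n') A) :
    BMat A m (n + n') :=
  dsum P Q + Matrix.of fun (i j : Fin m) =>
    if (i : ℕ) = d + (u : ℕ) ∧ m - d ≤ (j : ℕ) then
      cornerMat (X * Q ⟨(v : ℕ), lt_of_lt_of_le v.isLt hd⟩ j)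
    else 0

/-- The matrix unit `e^{(md,d)}_{u,v} ⊗ X`. -/
def eMat {md d : ℕ} {n : ℕ} (u : Fin md) (v : Fin d) (X : Mat A n) :
    Matrix (Fin md) (Fin d) (Mat A n) :=
  Matrix.of fun i j => if i = u ∧ j = v then X else 0

/-- The block matrix `[[I_d ⊗ I_n, 0],[-Y, I_{m-d} ⊗ I_n]]` used to define `σ(Y)`. -/
def shiftMat {m d n : ℕ} (hd : d ≤ m) (Y : Matrix (Fin (m - d)) (Fin d) (Mat A n)) :
    BMat A m n :=
  Matrix.of fun i j =>
    (if i = j then (1 : Mat A n) else 0) +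
    (if h : d ≤ (i : ℕ) ∧ (j : ℕ) < d then
      -Y ⟨(i : ℕ) - d, by have := i.isLt; omega⟩ ⟨(j : ℕ), h.2⟩
    else 0)

/-- A family `C` of sets of representatives is an nc set over `Gr^{(d;m)}(A)`:
it consists of invertible matrices, is saturated under the relation `~`
(i.e. it is a set of equivalence classes), and is closed under direct sums. -/
def IsNCSetCarrier {m d : ℕ} (hd : d ≤ m) (C : ∀ n, Set (BMat A m n)) : Prop :=
  (∀ n, ∀ a ∈ C n, IsUnit a) ∧
  (∀ n, ∀ a b : BMat A m n, grel m d n hd a b → (a ∈ C n ↔ b ∈ C n)) ∧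
  (∀ n n', ∀ a ∈ C n, ∀ b ∈ C n', dsum a b ∈ C (n + n'))

/-- `f` is an nc function on the nc set (with carrier) `C` over `Gr^{(d;m)}(A)`:
it descends to equivalence classes, preserves direct sums, and is similarity preserving. -/
def IsNCFun (R : Type) [CommRing R] [Algebra R A] {W : Type} [AddCommMonoid W] [Module R W]
    {m d : ℕ} (hd : d ≤ m) (C : ∀ n, Set (BMat A m n))
    (f : ∀ n, BMat A m n → Matrix (Fin n) (Fin n) W) : Prop :=
  (∀ n, ∀ a ∈ C n, ∀ b ∈ C n, grel m d n hd a b → f n a = f n b) ∧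
  (∀ n n', ∀ a ∈ C n, ∀ b ∈ C n', f (n + n') (dsum a b) = dsumW (f n a) (f n' b)) ∧
  (∀ n (s : (Matrix (Fin n) (Fin n) R)ˣ), ∀ a ∈ C n,
    simAct (s : Matrix (Fin n) (Fin n) R) a ∈ C n →
    f n (simAct (s : Matrix (Fin n) (Fin n) R) a) =
      rmulR (rmulL (s : Matrix (Fin n) (Fin n) R) (f n a))
        ((s⁻¹ : (Matrix (Fin n) (Fin n) R)ˣ) : Matrix (Fin n) (Fin n) R))

/-- `(u,v)`-admissibility of an nc set. -/
def Admissible (R : Type) [CommRing R] [Algebra R A] {m d : ℕ} (hd : d ≤ m)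
    (C : ∀ n, Set (BMat A m n)) (u : Fin (m - d)) (v : Fin d) : Prop :=
  ∀ n n' (a : BMat A m n) (b : BMat A m n') (X : Matrix (Fin n) (Fin n') A),
    a ∈ C n → b ∈ C n' →
    ∃ r : Rˣ, ins hd u v a b ((r : R) • X) ∈ C (n + n')

/-- The similarity-invariant envelope of an nc set. -/
def envC (R : Type) [CommRing R] [Algebra R A] {m d : ℕ} (hd : d ≤ m)
    (C : ∀ n, Set (BMat A m n)) : ∀ n, Set (BMat A m n) :=
  fun n => {x | ∃ (s : (Matrix (Fin n) (Fin n) R)ˣ) (a : BMat A m n),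
    a ∈ C n ∧ grel m d n hd x (simAct (s : Matrix (Fin n) (Fin n) R) a)}

end NC

section Res

variable {R : Type} [CommRing R] {A : Type} [Ring A] [Algebra R A]

/-- Entrywise inclusion `M_m(M_n(B)) → M_m(M_n(A))` for a subalgebra `B ⊆ A`. -/
def bmap (D : Subalgebra R A) {m n : ℕ} (b : BMat (↥D) m n) : BMat A m n :=
  Matrix.of fun i j => (b i j).map (fun x => (x : A))

/-- Entrywise inclusion for rectangular matrices over a subalgebra. -/
def rcmap (D : Subalgebra R A) {n n' : ℕ} (X : Matrix (Fin n) (Fin n') ↥D) :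
    Matrix (Fin n) (Fin n') A :=
  X.map (fun x => (x : A))

/-- `X` is invertible in `M_m(M_n(B))` for the subalgebra `B = D ⊆ A`. -/
def invIn (D : Subalgebra R A) {m n : ℕ} (X : BMat A m n) : Prop :=
  (∀ i j k l, X i j k l ∈ D) ∧
  ∃ Y : BMat A m n, (∀ i j k l, Y i j k l ∈ D) ∧ X * Y = 1 ∧ Y * X = 1

/-- The amplification `a^{⊕̃ n}` of an element `a ∈ M_m(A) = M_m(M_1(A))`. -/
def ampl {m : ℕ} (a : BMat A m 1) (n : ℕ) : BMat A m n :=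
  Matrix.of fun i j => Matrix.diagonal (fun _ => a i j 0 0)

/-- The matrix `r^{(d;m)}(P;Q)`: first `m-d` block columns are the last `m-d` block
columns of `P`, last `d` block columns are the last `d` block columns of `Q`. -/
def rmat {m d n : ℕ} (hd : d ≤ m) (P Q : BMat A m n) : BMat A m n :=
  Matrix.of fun i j =>
    if h : (j : ℕ) < m - d then P i ⟨d + (j : ℕ), by omega⟩ else Q i j

/-- The value `[B_{v,m-d+1},…,B_{v,m}] ⋅ ζ_u` of the `(d;m)`-Grassmannian resolvent,
where `ζ_u` is the `u`-th bottom block column of the inverse `Rinv` of an `r`-matrix. -/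
def resVal {m d n : ℕ} (hd : d ≤ m) (v : Fin d) (u : Fin (m - d))
    (Bm Rinv : BMat A m n) : Mat A n :=
  ∑ j : Fin d,
    Bm ⟨(v : ℕ), lt_of_lt_of_le v.isLt hd⟩ ⟨m - d + (j : ℕ), by have := j.isLt; omega⟩ *
    Rinv ⟨m - d + (j : ℕ), by have := j.isLt; omega⟩ ⟨d + (u : ℕ), by have := u.isLt; omega⟩

/-- Membership in the `(d;m)`-Grassmannian `B`-resolvent set of `π` (represented by `p`):
`b` represents an element of `Gr^{(d;m)}_n(B)` such that `π^{⊕n}` and `b` are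
transversal in `A`. -/
def ResMem {m d : ℕ} (hd : d ≤ m) (p : BMat A m 1) (D : Subalgebra R A) {n : ℕ}
    (b : BMat (↥D) m n) : Prop :=
  IsUnit b ∧ IsUnit (rmat hd (ampl p n) (bmap D b))

end Res


section Helpers

variable {R : Type} [CommRing R] {A : Type} [Ring A] [Algebra R A]

lemma uptri_map_eq {p q : ℕ} (T : Matrix (Fin p) (Fin q) R) :
    (uptri R T).map (algebraMap R A) =
      (Matrix.fromBlocks 1 (T.map (algebraMap R A)) 0 1).submatrix
        finSumFinEquiv.symm finSumFinEquiv.symm := by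
  have : uptri R T = (Matrix.fromBlocks 1 T 0 1).submatrix
      finSumFinEquiv.symm finSumFinEquiv.symm := rfl
  rw [this, ← Matrix.submatrix_map, Matrix.fromBlocks_map,
    Matrix.map_one _ (map_zero _) (map_one _), Matrix.map_zero _ (map_zero _),
    Matrix.map_one _ (map_zero _) (map_one _)]

lemma dsumMat_eq {n n' : ℕ} (X : Mat A n) (Y : Mat A n') :
    dsumMat X Y = (Matrix.fromBlocks X 0 0 Y).submatrix
      finSumFinEquiv.symm finSumFinEquiv.symm := rfl

lemma vcat_eq {p p' q : ℕ} (X : Matrix (Fin p) (Fin q) A) (Y : Matrix (Fin p') (Fin q) A) :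
    vcat X Y = (Matrix.fromRows X Y).submatrix finSumFinEquiv.symm id := by
  ext i j
  simp only [vcat, Matrix.of_apply, Matrix.submatrix_apply, id_eq]
  rcases i with ⟨i, hi⟩
  by_cases h : i < p
  · have e1 : (⟨i, hi⟩ : Fin (p + p')) = Fin.castAdd p' ⟨i, h⟩ := rfl
    rw [e1, finSumFinEquiv_symm_apply_castAdd]
    simp [h, Matrix.fromRows_apply_inl]
  · have e1 : (⟨i, hi⟩ : Fin (p + p')) = Fin.natAdd p ⟨i - p, by omega⟩ := Fin.ext (by simp; omega)
    rw [e1, finSumFinEquiv_symm_apply_natAdd]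
    simp [h, Matrix.fromRows_apply_inr]

lemma vcat_map {p p' q : ℕ} (f : A → A) (X : Matrix (Fin p) (Fin q) A)
    (Y : Matrix (Fin p') (Fin q) A) : True := trivial

lemma vcat_mapR {p p' q : ℕ} (X : Matrix (Fin p) (Fin q) R) (Y : Matrix (Fin p') (Fin q) R) :
    (vcat X Y).map (algebraMap R A) = vcat (X.map (algebraMap R A)) (Y.map (algebraMap R A)) := by
  ext i j
  simp only [vcat, Matrix.map_apply, Matrix.of_apply]
  split <;> rfl

lemma vcat_mul {p p' q r : ℕ} (X : Matrix (Fin p) (Fin q) A) (Y : Matrix (Fin p') (Fin q) A)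
    (Z : Matrix (Fin q) (Fin r) A) : vcat X Y * Z = vcat (X * Z) (Y * Z) := by
  rw [vcat_eq, vcat_eq]
  have : (Matrix.fromRows X Y).submatrix finSumFinEquiv.symm id * Z
      = ((Matrix.fromRows X Y) * Z).submatrix finSumFinEquiv.symm id := by
    have := Matrix.submatrix_mul_equiv (Matrix.fromRows X Y) Z
      finSumFinEquiv.symm (Equiv.refl (Fin q)) id
    simpa using this
  rw [this, Matrix.fromRows_mul]

lemma dsumMat_mul_vcat {n n' q : ℕ} (X : Mat A n) (B : Mat A n')
    (M : Matrix (Fin n) (Fin q) A) (N : Matrix (Fin n') (Fin q) A) :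
    dsumMat X B * vcat M N = vcat (X * M) (B * N) := by
  rw [dsumMat_eq, vcat_eq, vcat_eq]
  rw [Matrix.submatrix_mul_equiv (Matrix.fromBlocks X 0 0 B) (Matrix.fromRows M N)
    finSumFinEquiv.symm finSumFinEquiv.symm id]
  rw [Matrix.fromBlocks_mul_fromRows]
  simp

/-- Key lemma: product of the unipotent matrix with a direct-sum block. -/
lemma uptri_mul_dsumMat {p q : ℕ} (T T' : Matrix (Fin p) (Fin q) R)
    (D : Mat A p) (X : Mat A q)
    (h : T.map (algebraMap R A) * X = D * T'.map (algebraMap R A)) :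
    (uptri R T).map (algebraMap R A) * dsumMat D X =
      dsumMat D X * (uptri R T').map (algebraMap R A) := by
  rw [uptri_map_eq, uptri_map_eq, dsumMat_eq]
  rw [Matrix.submatrix_mul_equiv _ _ finSumFinEquiv.symm finSumFinEquiv.symm finSumFinEquiv.symm,
    Matrix.submatrix_mul_equiv _ _ finSumFinEquiv.symm finSumFinEquiv.symm finSumFinEquiv.symm]
  congr 1
  rw [Matrix.fromBlocks_multiply, Matrix.fromBlocks_multiply]
  simp [h]

lemma uptri_mul_uptri {p q : ℕ} (T T' : Matrix (Fin p) (Fin q) R) :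
    uptri R T * uptri R T' = uptri R (T' + T) := by
  unfold uptri
  simp only [Matrix.reindex_apply]
  rw [Matrix.submatrix_mul_equiv _ _ finSumFinEquiv.symm finSumFinEquiv.symm finSumFinEquiv.symm]
  congr 1
  rw [Matrix.fromBlocks_multiply]
  simp

lemma uptri_isUnit_map {p q : ℕ} (T : Matrix (Fin p) (Fin q) R) :
    ∃ u' : Mat A (p + q), (uptri R T).map (algebraMap R A) * u' = 1 ∧
      u' * (uptri R T).map (algebraMap R A) = 1 := by
  refine ⟨(uptri R (-T)).map (algebraMap R A), ?_, ?_⟩ <;>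
  · rw [← Matrix.map_mul, uptri_mul_uptri]
    simp only [neg_add_cancel, add_neg_cancel]
    have : uptri R (0 : Matrix (Fin p) (Fin q) R) = 1 := by
      unfold uptri
      simp only [Matrix.reindex_apply]
      rw [show (Matrix.fromBlocks (1 : Matrix (Fin p) (Fin p) R) 0 0 1) = 1 from
        Matrix.fromBlocks_one, Matrix.submatrix_one_equiv]
    rw [this, Matrix.map_one _ (map_zero _) (map_one _)]

/-- If left multiplication by `t^{⊕m}` equals right multiplication by a fixed invertible
block `u`, then `grel` holds. -/
lemma grel_of_blockwise {m d N : ℕ} (hd : d ≤ m) (t : Matrix (Fin N) (Fin N) R)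
    (Y : BMat A m N) (u u' : Mat A N) (huu' : u * u' = 1) (hu'u : u' * u = 1)
    (h : ∀ i j, t.map (algebraMap R A) * Y i j = Y i j * u) :
    grel m d N hd (simAct t Y) Y := by
  refine ⟨Matrix.diagonal (fun _ => u), ⟨?_, ?_, ?_, ?_⟩, ?_⟩
  · exact ⟨⟨Matrix.diagonal (fun _ => u), Matrix.diagonal (fun _ => u'),
      by rw [Matrix.diagonal_mul_diagonal]; simp [huu'],
      by rw [Matrix.diagonal_mul_diagonal]; simp [hu'u]⟩, rfl⟩
  · intro i j hi hj
    have : i ≠ j := by intro e; subst e; omega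
    simp [Matrix.diagonal_apply_ne _ this]
  · have : (Matrix.of fun i j : Fin (m - d) =>
        Matrix.diagonal (fun _ : Fin m => u)
          ⟨(i : ℕ), lt_of_lt_of_le i.isLt (Nat.sub_le m d)⟩
          ⟨(j : ℕ), lt_of_lt_of_le j.isLt (Nat.sub_le m d)⟩) =
        Matrix.diagonal (fun _ : Fin (m - d) => u) := by
      ext i j
      by_cases hij : i = j
      · subst hij; simp [Matrix.diagonal_apply_eq]
      · have : (⟨(i : ℕ), lt_of_lt_of_le i.isLt (Nat.sub_le m d)⟩ : Fin m) ≠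
            ⟨(j : ℕ), lt_of_lt_of_le j.isLt (Nat.sub_le m d)⟩ := by
          simp only [ne_eq, Fin.mk.injEq]
          exact fun e => hij (Fin.ext e)
        simp [Matrix.diagonal_apply_ne _ this, Matrix.diagonal_apply_ne _ hij]
    rw [this]
    exact ⟨⟨Matrix.diagonal (fun _ => u), Matrix.diagonal (fun _ => u'),
      by rw [Matrix.diagonal_mul_diagonal]; simp [huu'],
      by rw [Matrix.diagonal_mul_diagonal]; simp [hu'u]⟩, rfl⟩
  · have : (Matrix.of fun i j : Fin d =>
        Matrix.diagonal (fun _ : Fin m => u)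
          ⟨m - d + (i : ℕ), by have := i.isLt; omega⟩
          ⟨m - d + (j : ℕ), by have := j.isLt; omega⟩) =
        Matrix.diagonal (fun _ : Fin d => u) := by
      ext i j
      by_cases hij : i = j
      · subst hij; simp [Matrix.diagonal_apply_eq]
      · have : (⟨m - d + (i : ℕ), by have := i.isLt; omega⟩ : Fin m) ≠
            ⟨m - d + (j : ℕ), by have := j.isLt; omega⟩ := by
          simp only [ne_eq, Fin.mk.injEq]
          intro e
          exact hij (Fin.ext (by omega))
        simp [Matrix.diagonal_apply_ne _ this, Matrix.diagonal_apply_ne _ hij]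
    rw [this]
    exact ⟨⟨Matrix.diagonal (fun _ => u), Matrix.diagonal (fun _ => u'),
      by rw [Matrix.diagonal_mul_diagonal]; simp [huu'],
      by rw [Matrix.diagonal_mul_diagonal]; simp [hu'u]⟩, rfl⟩
  · exact Matrix.ext fun i j => by rw [Matrix.mul_diagonal]; exact h i j

end Helpers

/-- the three identities used in the proof of the Grassmannian
intertwining property. -/
theorem basic_identities {R : Type} [CommRing R] {A : Type} [Ring A] [Algebra R A]
    (m d : ℕ) (hd1 : 1 ≤ d) (hd : d ≤ m) {n n' : ℕ}
    (C : ∀ n, Set (BMat A m n)) (hC : IsNCSetCarrier hd C)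
    (a : BMat A m n) (b : BMat A m n') (ha : a ∈ C n) (hb : b ∈ C n')
    (s : (Matrix (Fin n) (Fin n) R)ˣ) :
    grel m d (n + n' + n) hd
      (simAct (uptri R (vcat (1 : Matrix (Fin n) (Fin n) R)
          (0 : Matrix (Fin n') (Fin n) R))) (dsum (dsum a b) a))
      (dsum (dsum a b) a) ∧
    grel m d (n + n' + n') hd
      (simAct (uptri R (vcat (0 : Matrix (Fin n) (Fin n') R)
          (1 : Matrix (Fin n') (Fin n') R))) (dsum (dsum a b) b))
      (dsum (dsum a b) b) ∧
    grel m d (n + n) hd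
      (simAct (uptri R ((s⁻¹ : (Matrix (Fin n) (Fin n) R)ˣ) : Matrix (Fin n) (Fin n) R))
        (dsum a (simAct (s : Matrix (Fin n) (Fin n) R) a)))
      (dsum a (simAct (s : Matrix (Fin n) (Fin n) R) a)) := by
  classical
  have halg : ∀ {p q r : ℕ} (M : Matrix (Fin p) (Fin q) R) (N : Matrix (Fin q) (Fin r) R),
      (M * N).map (algebraMap R A) = M.map (algebraMap R A) * N.map (algebraMap R A) :=
    fun M N => Matrix.map_mul
  refine ⟨?_, ?_, ?_⟩
  · -- identity (i)
    obtain ⟨u', hu1, hu2⟩ := uptri_isUnit_map (A := A)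
      (vcat (1 : Matrix (Fin n) (Fin n) R) (0 : Matrix (Fin n') (Fin n) R))
    refine grel_of_blockwise hd _ _ _ u' hu1 hu2 ?_
    intro i j
    show _ * dsumMat (dsumMat (a i j) (b i j)) (a i j) = _
    refine uptri_mul_dsumMat _ _ _ _ ?_
    rw [vcat_mapR, vcat_mul, dsumMat_mul_vcat]
    rw [Matrix.map_one _ (map_zero _) (map_one _), Matrix.map_zero _ (map_zero _)]
    simp
  · -- identity (ii)
    obtain ⟨u', hu1, hu2⟩ := uptri_isUnit_map (A := A)
      (vcat (0 : Matrix (Fin n) (Fin n') R) (1 : Matrix (Fin n') (Fin n') R))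
    refine grel_of_blockwise hd _ _ _ u' hu1 hu2 ?_
    intro i j
    show _ * dsumMat (dsumMat (a i j) (b i j)) (b i j) = _
    refine uptri_mul_dsumMat _ _ _ _ ?_
    rw [vcat_mapR, vcat_mul, dsumMat_mul_vcat]
    rw [Matrix.map_one _ (map_zero _) (map_one _), Matrix.map_zero _ (map_zero _)]
    simp
  · -- identity (iii)
    obtain ⟨u', hu1, hu2⟩ := uptri_isUnit_map (A := A) (1 : Matrix (Fin n) (Fin n) R)
    have key : ∀ i j : Fin (m),
        (uptri R ((s⁻¹ : (Matrix (Fin n) (Fin n) R)ˣ) : Matrix (Fin n) (Fin n) R)).map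
            (algebraMap R A) *
          (dsum a (simAct (s : Matrix (Fin n) (Fin n) R) a)) i j =
        (dsum a (simAct (s : Matrix (Fin n) (Fin n) R) a)) i j *
          (uptri R (1 : Matrix (Fin n) (Fin n) R)).map (algebraMap R A) := by
      intro i j
      show _ * dsumMat (a i j) ((s : Matrix (Fin n) (Fin n) R).map (algebraMap R A) * a i j) = _
      refine uptri_mul_dsumMat _ _ _ _ ?_
      rw [← Matrix.mul_assoc, ← halg]
      have : ((s⁻¹ : (Matrix (Fin n) (Fin n) R)ˣ) : Matrix (Fin n) (Fin n) R) *
          (s : Matrix (Fin n) (Fin n) R) = 1 := s.inv_mul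
      rw [this, Matrix.map_one _ (map_zero _) (map_one _), Matrix.one_mul, Matrix.mul_one]
    exact grel_of_blockwise hd _ _ _ u' hu1 hu2 key
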